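/- Under a zero-sum weighting of a partial geometry with parameters (s, t, α), scaled so that the maximum line weight is 1, and assuming t > sα + 3α − 4, α > 1, and at most t lines have nonnegative weight: if ℓ₁ and ℓ₂ are the lines of highest and second-highest weight, then ℓ₁ and ℓ₂ meet in a point. -/

import Mathlib

open scoped Classical BigOperators

/-- A partial geometry with parameters `(s, t, α)`: lines are finsets of points,
every line has `s+1` points, every point lies on `t+1` lines, two distinct points
lie on at most one common line, and for every line `ℓ` and point `p ∉ ℓ` exactly
`α` lines through `p` meet `ℓ`. -/
structure PartialGeometry (P : Type*) [Fintype P] [DecidableEq P] (s t α : ℕ) where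
  lines : Finset (Finset P)
  line_size : ∀ ℓ ∈ lines, ℓ.card = s + 1
  point_deg : ∀ p : P, (lines.filter (fun ℓ => p ∈ ℓ)).card = t + 1
  two_points : ∀ p q : P, p ≠ q → (lines.filter (fun ℓ => p ∈ ℓ ∧ q ∈ ℓ)).card ≤ 1
  alpha_eq : ∀ ℓ ∈ lines, ∀ p : P, p ∉ ℓ →
      (lines.filter (fun m => p ∈ m ∧ ∃ q ∈ m, q ∈ ℓ)).card = α

namespace PartialGeometry

variable {P : Type*} [Fintype P] [DecidableEq P] {s t α : ℕ} (G : PartialGeometry P s t α)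

/-- two lines with two common points are equal -/
lemma eq_of_two_common {m ℓ : Finset P} (hm : m ∈ G.lines) (hℓ : ℓ ∈ G.lines)
    {p q : P} (hpq : p ≠ q) (hpm : p ∈ m) (hqm : q ∈ m) (hpl : p ∈ ℓ) (hql : q ∈ ℓ) :
    m = ℓ := by
  by_contra hne
  have h := G.two_points p q hpq
  have hsub : ({m, ℓ} : Finset (Finset P)) ⊆ G.lines.filter (fun ℓ => p ∈ ℓ ∧ q ∈ ℓ) := by
    intro x hx
    simp only [Finset.mem_insert, Finset.mem_singleton] at hx
    rcases hx with rfl | rfl <;> simp [Finset.mem_filter, hm, hℓ, hpm, hqm, hpl, hql]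
  have h2 : ({m, ℓ} : Finset (Finset P)).card = 2 := Finset.card_pair hne
  have := Finset.card_le_card hsub
  omega

/-- neighbours of a line: other lines meeting it -/
noncomputable def nbrs (ℓ : Finset P) : Finset (Finset P) :=
  G.lines.filter (fun m => m ≠ ℓ ∧ (m ∩ ℓ).Nonempty)

lemma nbrs_eq_biUnion {ℓ : Finset P} (hℓ : ℓ ∈ G.lines) :
    G.nbrs ℓ = ℓ.biUnion (fun p => (G.lines.filter (fun m => p ∈ m)).erase ℓ) := by
  ext m
  simp only [nbrs, Finset.mem_filter, Finset.mem_biUnion, Finset.mem_erase]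
  constructor
  · rintro ⟨hm, hne, p, hp⟩
    simp only [Finset.mem_inter] at hp
    exact ⟨p, hp.2, hne, hm, hp.1⟩
  · rintro ⟨p, hpl, hne, hm, hpm⟩
    exact ⟨hm, hne, p, Finset.mem_inter.2 ⟨hpm, hpl⟩⟩

lemma nbrs_card {ℓ : Finset P} (hℓ : ℓ ∈ G.lines) : (G.nbrs ℓ).card = (s + 1) * t := by
  rw [nbrs_eq_biUnion G hℓ, Finset.card_biUnion]
  · have : ∀ p ∈ ℓ, ((G.lines.filter (fun m => p ∈ m)).erase ℓ).card = t := by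
      intro p hp
      rw [Finset.card_erase_of_mem (by simp [Finset.mem_filter, hℓ, hp]), G.point_deg p]; omega
    rw [Finset.sum_congr rfl this, Finset.sum_const, G.line_size ℓ hℓ, smul_eq_mul]
  · intro p hp q hq hpq
    simp only [Finset.disjoint_left]
    intro m hm hm'
    simp only [Finset.mem_erase, Finset.mem_filter] at hm hm'
    exact hm.1 (G.eq_of_two_common hm.2.1 hℓ hpq hm.2.2 hm'.2.2 hp hq)

lemma nbrs_filter_mem_eq_of_mem {ℓ : Finset P} (hℓ : ℓ ∈ G.lines) {q : P} (hq : q ∈ ℓ) :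
    (G.nbrs ℓ).filter (fun m => q ∈ m) = (G.lines.filter (fun m => q ∈ m)).erase ℓ := by
  ext m
  simp only [nbrs, Finset.filter_filter, Finset.mem_filter, Finset.mem_erase]
  constructor
  · rintro ⟨hm, ⟨hne, _⟩, hqm⟩
    exact ⟨hne, hm, hqm⟩
  · rintro ⟨hne, hm, hqm⟩
    exact ⟨hm, ⟨hne, ⟨q, Finset.mem_inter.2 ⟨hqm, hq⟩⟩⟩, hqm⟩

lemma nbrs_filter_mem_eq_of_not_mem {ℓ : Finset P} {q : P} (hq : q ∉ ℓ) :
    (G.nbrs ℓ).filter (fun m => q ∈ m)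
      = G.lines.filter (fun m => q ∈ m ∧ ∃ r ∈ m, r ∈ ℓ) := by
  ext m
  simp only [nbrs, Finset.filter_filter, Finset.mem_filter]
  constructor
  · rintro ⟨hm, ⟨hne, r, hr⟩, hqm⟩
    simp only [Finset.mem_inter] at hr
    exact ⟨hm, hqm, r, hr.1, hr.2⟩
  · rintro ⟨hm, hqm, r, hrm, hrl⟩
    refine ⟨hm, ⟨?_, ⟨r, Finset.mem_inter.2 ⟨hrm, hrl⟩⟩⟩, hqm⟩
    rintro rfl; exact hq hqm

/-- eigenvalue identity: sum of weights over neighbours of `ℓ` is `(t-α)·wt ℓ`. -/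
lemma sum_nbrs (f : P → ℝ) (hf : ∑ p, f p = 0) {ℓ : Finset P} (hℓ : ℓ ∈ G.lines) :
    ∑ m ∈ G.nbrs ℓ, ∑ p ∈ m, f p = ((t : ℝ) - α) * ∑ p ∈ ℓ, f p := by
  have key : ∑ m ∈ G.nbrs ℓ, ∑ p ∈ m, f p
      = ∑ q : P, (((G.nbrs ℓ).filter (fun m => q ∈ m)).card : ℝ) * f q := by
    have h1 : ∀ m ∈ G.nbrs ℓ, ∑ p ∈ m, f p = ∑ q : P, if q ∈ m then f q else 0 := by
      intro m _
      rw [Finset.sum_ite_mem, Finset.univ_inter]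
    rw [Finset.sum_congr rfl h1, Finset.sum_comm]
    refine Finset.sum_congr rfl fun q _ => ?_
    rw [Finset.sum_ite, Finset.sum_const_zero, add_zero, Finset.sum_const, nsmul_eq_mul]
  have hcard : ∀ q : P, (((G.nbrs ℓ).filter (fun m => q ∈ m)).card : ℝ) * f q
      = if q ∈ ℓ then (t : ℝ) * f q else (α : ℝ) * f q := by
    intro q
    by_cases hq : q ∈ ℓ
    · rw [if_pos hq, nbrs_filter_mem_eq_of_mem G hℓ hq,
        Finset.card_erase_of_mem (by simp [Finset.mem_filter, hℓ, hq]), G.point_deg q]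
      norm_num
    · rw [if_neg hq, nbrs_filter_mem_eq_of_not_mem G hq, G.alpha_eq ℓ hℓ q hq]
  rw [key, Finset.sum_congr rfl (fun q _ => hcard q), Finset.sum_ite]
  have hin : Finset.univ.filter (fun q => q ∈ ℓ) = ℓ := by
    rw [Finset.filter_mem_eq_inter, Finset.univ_inter]
  have hnot : ∑ q ∈ Finset.univ.filter (fun q => ¬ q ∈ ℓ), f q = - ∑ q ∈ ℓ, f q := by
    have h2 := Finset.sum_filter_add_sum_filter_not Finset.univ (fun q => q ∈ ℓ) f
    rw [hin, hf] at h2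
    linarith
  rw [hin, ← Finset.mul_sum, ← Finset.mul_sum, hnot]
  ring

/-- common neighbours of two disjoint lines: at most `(s+1)α`. -/
lemma common_nbrs_card_le {ℓ₁ ℓ₂ : Finset P} (h1 : ℓ₁ ∈ G.lines) (h2 : ℓ₂ ∈ G.lines)
    (hd : ∀ q, ¬(q ∈ ℓ₁ ∧ q ∈ ℓ₂)) :
    (G.nbrs ℓ₁ ∩ G.nbrs ℓ₂).card ≤ (s + 1) * α := by
  have hsub : G.nbrs ℓ₁ ∩ G.nbrs ℓ₂
      ⊆ ℓ₂.biUnion (fun p => G.lines.filter (fun m => p ∈ m ∧ ∃ q ∈ m, q ∈ ℓ₁)) := by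
    intro m hm
    simp only [Finset.mem_inter, nbrs, Finset.mem_filter] at hm
    obtain ⟨⟨hml, _, q1, hq1⟩, ⟨_, _, p2, hp2⟩⟩ := hm
    simp only [Finset.mem_inter] at hq1 hp2
    simp only [Finset.mem_biUnion, Finset.mem_filter]
    exact ⟨p2, hp2.2, hml, hp2.1, q1, hq1.1, hq1.2⟩
  calc (G.nbrs ℓ₁ ∩ G.nbrs ℓ₂).card
      ≤ (ℓ₂.biUnion (fun p => G.lines.filter (fun m => p ∈ m ∧ ∃ q ∈ m, q ∈ ℓ₁))).card :=
        Finset.card_le_card hsub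
    _ ≤ ∑ p ∈ ℓ₂, (G.lines.filter (fun m => p ∈ m ∧ ∃ q ∈ m, q ∈ ℓ₁)).card :=
        Finset.card_biUnion_le
    _ = ∑ p ∈ ℓ₂, α := Finset.sum_congr rfl fun p hp =>
        G.alpha_eq ℓ₁ h1 p (fun hq => hd p ⟨hq, hp⟩)
    _ = (s + 1) * α := by rw [Finset.sum_const, G.line_size ℓ₂ h2, smul_eq_mul]

end PartialGeometry

/-- Under the assumptions of Section 3 (max line weight 1, at most t nonnegative
lines, at least 2 positive lines, t > sα + 3α − 4, α > 1), the two highest-weight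
lines ℓ₁ and ℓ₂ meet in a point. -/
theorem highest_two_lines_meet {P : Type*} [Fintype P] [DecidableEq P]
    {s t α : ℕ} (hα : 1 < α) (G : PartialGeometry P s t α)
    (ht : (t : ℤ) > s * α + 3 * α - 4)
    (f : P → ℝ) (hf : ∑ p, f p = 0)
    (ℓ₁ ℓ₂ : Finset P) (h1 : ℓ₁ ∈ G.lines) (h2 : ℓ₂ ∈ G.lines) (hne : ℓ₁ ≠ ℓ₂)
    (hwt1 : ∑ p ∈ ℓ₁, f p = 1)
    (hmax : ∀ m ∈ G.lines, ∑ p ∈ m, f p ≤ 1)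
    (hsecond : ∀ m ∈ G.lines, m ≠ ℓ₁ → ∑ p ∈ m, f p ≤ ∑ p ∈ ℓ₂, f p)
    (hfew : (G.lines.filter (fun m => 0 ≤ ∑ p ∈ m, f p)).card ≤ t)
    (hpos : 2 ≤ (G.lines.filter (fun m => 0 < ∑ p ∈ m, f p)).card) :
    ∃ q, q ∈ ℓ₁ ∧ q ∈ ℓ₂ := by
  by_contra hcon
  push_neg at hcon
  have hd : ∀ q, ¬(q ∈ ℓ₁ ∧ q ∈ ℓ₂) := fun q ⟨a, b⟩ => hcon q a b
  -- second weight is positive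
  have hwl2 : 0 < ∑ p ∈ ℓ₂, f p := by
    obtain ⟨a, ha, b, hb, hab⟩ := Finset.one_lt_card.mp (lt_of_lt_of_le one_lt_two hpos)
    simp only [Finset.mem_filter] at ha hb
    by_cases hal : a = ℓ₁
    · have hbl : b ≠ ℓ₁ := fun h => hab (h ▸ hal ▸ rfl)
      exact lt_of_lt_of_le hb.2 (hsecond b hb.1 hbl)
    · exact lt_of_lt_of_le ha.2 (hsecond a ha.1 hal)
  -- s ≥ 1
  have hs : 1 ≤ s := by
    obtain ⟨p, hp⟩ : ℓ₂.Nonempty := Finset.card_pos.mp (by rw [G.line_size ℓ₂ h2]; omega)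
    have hp1 : p ∉ ℓ₁ := fun h => hd p ⟨h, hp⟩
    have hcard := G.alpha_eq ℓ₁ h1 p hp1
    have hne0 : (G.lines.filter (fun m => p ∈ m ∧ ∃ q ∈ m, q ∈ ℓ₁)).Nonempty := by
      rw [← Finset.card_pos, hcard]; omega
    obtain ⟨m, hm⟩ := hne0
    simp only [Finset.mem_filter] at hm
    obtain ⟨hml, hpm, q, hqm, hql⟩ := hm
    have hpq : q ≠ p := fun h => hp1 (h ▸ hql)
    have : 1 < m.card := Finset.one_lt_card.mpr ⟨q, hqm, p, hpm, hpq⟩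
    have := G.line_size m hml
    omega
  -- t ≥ α + 1
  have htα : α + 1 ≤ t := by
    have h0 : (0:ℤ) ≤ (s:ℤ) * α := by positivity
    have : ((α:ℤ)) + 1 ≤ t := by linarith [ht, (by exact_mod_cast hα : (1:ℤ) < α)]
    exact_mod_cast this
  set A := G.lines.filter (fun m => 0 ≤ ∑ p ∈ m, f p) with hA
  set N₁ := G.nbrs ℓ₁ with hN₁
  set N₂ := G.nbrs ℓ₂ with hN₂
  have hl1N1 : ℓ₁ ∉ N₁ := by simp [hN₁, PartialGeometry.nbrs]
  have hl2N2 : ℓ₂ ∉ N₂ := by simp [hN₂, PartialGeometry.nbrs]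
  have hl1N2 : ℓ₁ ∉ N₂ := by
    intro h
    rw [hN₂] at h
    simp only [PartialGeometry.nbrs, Finset.mem_filter] at h
    obtain ⟨-, -, q, hq⟩ := h
    rw [Finset.mem_inter] at hq
    exact hd q ⟨hq.1, hq.2⟩
  have hl2N1 : ℓ₂ ∉ N₁ := by
    intro h
    rw [hN₁] at h
    simp only [PartialGeometry.nbrs, Finset.mem_filter] at h
    obtain ⟨-, -, q, hq⟩ := h
    rw [Finset.mem_inter] at hq
    exact hd q ⟨hq.2, hq.1⟩
  -- negative neighbours exist
  have hbig : ∀ (N : Finset (Finset P)), N.card = (s+1)*t → (N \ A).Nonempty := by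
    intro N hcard
    rw [Finset.sdiff_nonempty]
    intro hsub
    have := Finset.card_le_card hsub
    rw [hcard] at this
    have h2t : 2 * t ≤ (s+1) * t := Nat.mul_le_mul_right t (by omega)
    omega
  have hneg : ∀ (N : Finset (Finset P)), N ⊆ G.lines → ∑ m ∈ N \ A, ∑ p ∈ m, f p ≤ 0 ∧
      ((N \ A).Nonempty → ∑ m ∈ N \ A, ∑ p ∈ m, f p < 0) := by
    intro N hsub
    have hlt : ∀ m ∈ N \ A, ∑ p ∈ m, f p < 0 := by
      intro m hm
      rw [Finset.mem_sdiff, hA, Finset.mem_filter] at hm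
      have := hm.2
      push_neg at this
      exact this (hsub hm.1)
    exact ⟨Finset.sum_nonpos (fun m hm => le_of_lt (hlt m hm)),
      fun hn => Finset.sum_neg hlt hn⟩
  have hN1sub : N₁ ⊆ G.lines := Finset.filter_subset _ _
  have hN2sub : N₂ ⊆ G.lines := Finset.filter_subset _ _
  set A₁ := N₁ ∩ A with hA₁
  set A₂ := N₂ ∩ A with hA₂
  -- k₁ bound
  have hk1 : (t:ℤ) - α + 1 ≤ A₁.card := by
    have hsum := G.sum_nbrs f hf h1
    rw [← hN₁, hwt1, mul_one] at hsum
    have hsplit := Finset.sum_inter_add_sum_sdiff N₁ A (fun m => ∑ p ∈ m, f p)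
    have hnegsum := (hneg N₁ hN1sub).2 (hbig N₁ (G.nbrs_card h1))
    have hub : ∑ m ∈ A₁, ∑ p ∈ m, f p ≤ (A₁.card : ℝ) * 1 := by
      have := Finset.sum_le_card_nsmul A₁ (fun m => ∑ p ∈ m, f p) 1
        (fun m hm => hmax m (hN1sub (Finset.mem_inter.mp hm).1))
      rwa [nsmul_eq_mul] at this
    have : (t:ℝ) - α < A₁.card := by
      rw [mul_one] at hub
      have : ∑ m ∈ A₁, ∑ p ∈ m, f p + ∑ m ∈ N₁ \ A, ∑ p ∈ m, f p = (t:ℝ) - α := by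
        rw [← hsum]; exact hsplit
      linarith
    have : (t:ℝ) - (α:ℝ) < (A₁.card : ℝ) := this
    have := (by exact_mod_cast this : (t:ℤ) - α < (A₁.card : ℤ))
    omega
  -- k₂ bound
  have hk2 : (t:ℤ) - α + 1 ≤ A₂.card := by
    have hsum := G.sum_nbrs f hf h2
    rw [← hN₂] at hsum
    have hsplit := Finset.sum_inter_add_sum_sdiff N₂ A (fun m => ∑ p ∈ m, f p)
    have hnegsum := (hneg N₂ hN2sub).2 (hbig N₂ (G.nbrs_card h2))
    have hub : ∑ m ∈ A₂, ∑ p ∈ m, f p ≤ (A₂.card : ℝ) * (∑ p ∈ ℓ₂, f p) := by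
      have := Finset.sum_le_card_nsmul A₂ (fun m => ∑ p ∈ m, f p) (∑ p ∈ ℓ₂, f p)
        (fun m hm => by
          have hmN := (Finset.mem_inter.mp hm).1
          exact hsecond m (hN2sub hmN) (fun h => hl1N2 (h ▸ hmN)))
      rwa [nsmul_eq_mul] at this
    have hlt : ((t:ℝ) - α) * (∑ p ∈ ℓ₂, f p) < (A₂.card : ℝ) * (∑ p ∈ ℓ₂, f p) := by
      have : ∑ m ∈ A₂, ∑ p ∈ m, f p + ∑ m ∈ N₂ \ A, ∑ p ∈ m, f p
          = ((t:ℝ) - α) * (∑ p ∈ ℓ₂, f p) := by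
        rw [← hsum]; exact hsplit
      linarith
    have : (t:ℝ) - (α:ℝ) < (A₂.card : ℝ) := lt_of_mul_lt_mul_right hlt hwl2.le
    have := (by exact_mod_cast this : (t:ℤ) - α < (A₂.card : ℤ))
    omega
  -- final counting
  have hcommon : (A₁ ∩ A₂).card ≤ (s+1) * α := by
    refine le_trans (Finset.card_le_card ?_) (G.common_nbrs_card_le h1 h2 hd)
    intro m hm
    simp only [hA₁, hA₂, Finset.mem_inter] at hm ⊢
    exact ⟨hm.1.1, hm.2.1⟩
  have hunion : A₁.card + A₂.card = (A₁ ∪ A₂).card + (A₁ ∩ A₂).card :=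
    (Finset.card_union_add_card_inter A₁ A₂).symm
  have hBsub : insert ℓ₁ (insert ℓ₂ (A₁ ∪ A₂)) ⊆ A := by
    intro m hm
    simp only [Finset.mem_insert] at hm
    rcases hm with rfl | rfl | hm
    · simp [hA, Finset.mem_filter, h1, hwt1]
    · simp only [hA, Finset.mem_filter]; exact ⟨h2, le_of_lt hwl2⟩
    · rcases Finset.mem_union.mp hm with h | h
      · exact (Finset.mem_inter.mp h).2
      · exact (Finset.mem_inter.mp h).2
  have hl2mem : ℓ₂ ∉ A₁ ∪ A₂ := by
    intro h
    rcases Finset.mem_union.mp h with h | h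
    · exact hl2N1 (Finset.mem_inter.mp h).1
    · exact hl2N2 (Finset.mem_inter.mp h).1
  have hl1mem : ℓ₁ ∉ insert ℓ₂ (A₁ ∪ A₂) := by
    simp only [Finset.mem_insert]
    rintro (h | h)
    · exact hne h
    · rcases Finset.mem_union.mp h with h | h
      · exact hl1N1 (Finset.mem_inter.mp h).1
      · exact hl1N2 (Finset.mem_inter.mp h).1
  have hBcard : (insert ℓ₁ (insert ℓ₂ (A₁ ∪ A₂))).card = 2 + (A₁ ∪ A₂).card := by
    rw [Finset.card_insert_of_notMem hl1mem, Finset.card_insert_of_notMem hl2mem]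
    omega
  have hAcard : (insert ℓ₁ (insert ℓ₂ (A₁ ∪ A₂))).card ≤ t :=
    le_trans (Finset.card_le_card hBsub) hfew
  -- put everything together over ℤ
  have e1 : ((s:ℤ) + 1) * α = s * α + α := by ring
  have c1 : ((A₁ ∩ A₂).card : ℤ) ≤ ((s:ℤ) + 1) * α := by exact_mod_cast hcommon
  have c2 : ((A₁.card : ℤ)) + A₂.card = ((A₁ ∪ A₂).card : ℤ) + (A₁ ∩ A₂).card := by
    exact_mod_cast hunion
  have c3 : 2 + ((A₁ ∪ A₂).card : ℤ) ≤ t := by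
    have : (2 + (A₁ ∪ A₂).card : ℕ) ≤ t := hBcard ▸ hAcard
    exact_mod_cast this
  linarith
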